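/- (Geoffrion's scalarization theorem, used as Theorem 1 part 2.) If h̄ ∈ H is properly Pareto optimal, then there exists a weight vector μ : A → ℝ with μ(a) > 0 for all a ∈ A and ∑_{a∈A} μ(a) = 1 such that ∑_{a∈A} μ(a)·r_a(h̄) ≤ ∑_{a∈A} μ(a)·r_a(h) for every h ∈ H. -/

import Mathlib

open Finset

lemma single_decomp {K : Type*} [Fintype K] [DecidableEq K] (y : EuclideanSpace ℝ K) :
    y = ∑ k, y k • EuclideanSpace.single k (1:ℝ) := by
  ext j
  have h1 : (∑ k, y k • EuclideanSpace.single k (1:ℝ)) j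
      = ∑ k, (y k • EuclideanSpace.single k (1:ℝ)) j :=
    by rw [WithLp.ofLp_sum]; exact Finset.sum_apply j Finset.univ _
  rw [h1]
  simp [EuclideanSpace.single_apply]

lemma gordan_convex {K E : Type*} [Fintype K] [Nonempty K] [AddCommGroup E] [Module ℝ E]
    (C : Set E) (hC : Convex ℝ C) (hne : C.Nonempty) (f : K → E → ℝ)
    (hf : ∀ k, ConvexOn ℝ C (f k))
    (hnosol : ¬ ∃ x ∈ C, ∀ k, f k x < 0) :
    ∃ lam : K → ℝ, (∀ k, 0 ≤ lam k) ∧ (0 < ∑ k, lam k) ∧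
      ∀ x ∈ C, 0 ≤ ∑ k, lam k * f k x := by
  classical
  set S : Set (EuclideanSpace ℝ K) := {y | ∃ x ∈ C, ∀ k, f k x < y k} with hS
  have hSconv : Convex ℝ S := by
    rintro y₁ ⟨x₁, hx₁, h₁⟩ y₂ ⟨x₂, hx₂, h₂⟩ a b ha hb hab
    refine ⟨a • x₁ + b • x₂, hC hx₁ hx₂ ha hb hab, fun k => ?_⟩
    have h3 := (hf k).2 hx₁ hx₂ ha hb hab
    have hmain : a * f k x₁ + b * f k x₂ < a * y₁ k + b * y₂ k := by
      rcases eq_or_lt_of_le ha with h | h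
      · rcases eq_or_lt_of_le hb with h' | h'
        · exfalso; rw [← h, ← h'] at hab; linarith
        · nlinarith [h₁ k, h₂ k]
      · nlinarith [h₁ k, h₂ k, mul_le_mul_of_nonneg_left (le_of_lt (h₂ k)) hb]
    have : (a • y₁ + b • y₂) k = a * y₁ k + b * y₂ k := by
      simp [PiLp.add_apply, PiLp.smul_apply]
    rw [this]
    calc f k (a • x₁ + b • x₂) ≤ a * f k x₁ + b * f k x₂ := by simpa using h3
      _ < a * y₁ k + b * y₂ k := hmain
  have hSopen : IsOpen S := by
    have : S = ⋃ x ∈ C, ⋂ k, {y : EuclideanSpace ℝ K | f k x < y k} := by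
      ext y; simp [hS]
    rw [this]
    refine isOpen_biUnion fun x _ => isOpen_iInter_of_finite fun k => ?_
    exact isOpen_lt continuous_const (EuclideanSpace.proj k).continuous
  have h0 : (0 : EuclideanSpace ℝ K) ∉ S := by
    rintro ⟨x, hx, hlt⟩
    exact hnosol ⟨x, hx, fun k => by simpa using hlt k⟩
  obtain ⟨L, hL⟩ := geometric_hahn_banach_open_point hSconv hSopen h0
  simp only [map_zero] at hL
  obtain ⟨x₀, hx₀⟩ := hne
  set lam : K → ℝ := fun k => -L (EuclideanSpace.single k 1) with hlam
  have hLrep : ∀ y : EuclideanSpace ℝ K, L y = ∑ k, y k * L (EuclideanSpace.single k 1) := by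
    intro y
    conv_lhs => rw [single_decomp y]
    rw [map_sum]
    simp [smul_eq_mul]
  -- membership of shifted points
  have hmem : ∀ (x : E), x ∈ C → ∀ ε > (0:ℝ), ∀ t : ℝ, 0 ≤ t → ∀ k,
      ((show EuclideanSpace ℝ K from WithLp.toLp 2 fun j => f j x + ε) + t • EuclideanSpace.single k (1:ℝ)) ∈ S := by
    intro x hx ε hε t ht k
    refine ⟨x, hx, fun j => ?_⟩
    have : ((show EuclideanSpace ℝ K from WithLp.toLp 2 fun j => f j x + ε) + t • EuclideanSpace.single k (1:ℝ)) j
        = f j x + ε + t * (if j = k then 1 else 0) := by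
      simp [EuclideanSpace.single_apply]
    rw [this]
    split <;> nlinarith
  have hlamnn : ∀ k, 0 ≤ lam k := by
    intro k
    by_contra hneg
    push_neg at hneg
    have hLk : 0 < L (EuclideanSpace.single k 1) := by
      have : L (EuclideanSpace.single k 1) = -lam k := by simp [hlam]
      rw [this]; linarith
    set y₀ : EuclideanSpace ℝ K := (show EuclideanSpace ℝ K from WithLp.toLp 2 fun j => f j x₀ + 1) with hy₀def
    have hy₀S : y₀ ∈ S := by
      have := hmem x₀ hx₀ 1 one_pos 0 le_rfl k
      simpa using this
    have hLy₀ : L y₀ < 0 := hL _ hy₀S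
    set t : ℝ := (1 - L y₀) / L (EuclideanSpace.single k 1) with htdef
    have ht : 0 ≤ t := div_nonneg (by linarith) (le_of_lt hLk)
    have hin := hmem x₀ hx₀ 1 one_pos t ht k
    have := hL _ hin
    rw [map_add, map_smul] at this
    have hteq : t * L (EuclideanSpace.single k 1) = 1 - L y₀ := by
      rw [htdef]; field_simp
    have : L y₀ + t * L (EuclideanSpace.single k 1) < 0 := by
      simpa [hy₀def, smul_eq_mul] using this
    rw [hteq] at this
    linarith
  have hsumpos : 0 < ∑ k, lam k := by
    have hy₀S : (show EuclideanSpace ℝ K from WithLp.toLp 2 fun j => f j x₀ + 1) ∈ S := by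
      have := hmem x₀ hx₀ 1 one_pos 0 le_rfl (Classical.arbitrary K)
      simpa using this
    have hLy₀ : L (show EuclideanSpace ℝ K from WithLp.toLp 2 fun j => f j x₀ + 1) < 0 := hL _ hy₀S
    by_contra hle
    push_neg at hle
    have hall : ∀ k, lam k = 0 := by
      intro k
      have h1 := hlamnn k
      have := Finset.single_le_sum (fun j _ => hlamnn j) (Finset.mem_univ k)
      linarith
    have : L (show EuclideanSpace ℝ K from WithLp.toLp 2 fun j => f j x₀ + 1) = 0 := by
      rw [hLrep]
      apply Finset.sum_eq_zero
      intro k _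
      have hk : L (EuclideanSpace.single k 1) = 0 := by
        have := hall k; simp [hlam] at this; linarith
      simp [hk]
    linarith
  refine ⟨lam, hlamnn, hsumpos, ?_⟩
  intro x hx
  have key : ∀ ε > (0:ℝ), 0 < (∑ k, lam k * f k x) + ε * ∑ k, lam k := by
    intro ε hε
    have hyS := hmem x hx ε hε 0 le_rfl (Classical.arbitrary K)
    have hyS' : (show EuclideanSpace ℝ K from WithLp.toLp 2 fun j => f j x + ε) ∈ S := by simpa using hyS
    have hLy : L (show EuclideanSpace ℝ K from WithLp.toLp 2 fun j => f j x + ε) < 0 := hL _ hyS'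
    rw [hLrep] at hLy
    have : ∑ k, (f k x + ε) * L (EuclideanSpace.single k 1)
        = -((∑ k, lam k * f k x) + ε * ∑ k, lam k) := by
      rw [neg_add, ← Finset.sum_neg_distrib, Finset.mul_sum, ← Finset.sum_neg_distrib,
        ← Finset.sum_add_distrib]
      apply Finset.sum_congr rfl
      intro k _
      simp [hlam]; ring
    rw [this] at hLy
    linarith
  by_contra hlt
  push_neg at hlt
  have hε : 0 < -(∑ k, lam k * f k x) / (∑ k, lam k) := by
    apply div_pos (by linarith) hsumpos
  have := key _ hε
  rw [div_mul_cancel₀] at this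
  · linarith
  · linarith

/-- Pareto optimality of `h` in the hypothesis class `H` w.r.t. the group risks `r`. -/
def ParetoOpt {A E : Type*} (H : Set E) (r : A → E → ℝ) (h : E) : Prop :=
  h ∈ H ∧ ¬ ∃ h' ∈ H, (∀ a, r a h' ≤ r a h) ∧ ∃ a, r a h' < r a h

/-- Geoffrion: a properly Pareto optimal point of a convex multiobjective
problem solves a linear weighting problem with strictly positive weights summing to 1. -/
theorem geoffrion_scalarization {A E : Type*} [Fintype A] [Nonempty A]
    [AddCommGroup E] [Module ℝ E]
    (H : Set E) (hH : Convex ℝ H)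
    (r : A → E → ℝ) (hconv : ∀ a, ConvexOn ℝ H (r a))
    (hbar : E)
    (hPO : ParetoOpt H r hbar)
    (hproper : ∃ M > (0 : ℝ), ∀ a : A, ∀ h ∈ H, r a h < r a hbar →
      ∃ a' : A, r a' hbar < r a' h ∧ r a hbar - r a h ≤ M * (r a' h - r a' hbar)) :
    ∃ μ : A → ℝ, (∀ a, 0 < μ a) ∧ (∑ a, μ a) = 1 ∧
      ∀ h ∈ H, ∑ a, μ a * r a hbar ≤ ∑ a, μ a * r a h := by
  classical
  obtain ⟨hbarH, _⟩ := hPO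
  obtain ⟨M, hM, hprop⟩ := hproper
  set g : A → E → ℝ := fun j x => r j x - r j hbar with hg
  set f : A → A → E → ℝ := fun i j x => if j = i then g i x else g i x + M * g j x with hf
  have hgconv : ∀ j, ConvexOn ℝ H (g j) := fun j =>
    (hconv j).sub (concaveOn_const _ hH)
  have hfconv : ∀ i j, ConvexOn ℝ H (f i j) := by
    intro i j
    by_cases h : j = i
    · have := hgconv i
      simp only [hf, h, if_pos rfl]
      exact this
    · simp only [hf, if_neg h]
      exact (hgconv i).add ((hgconv j).smul hM.le)
  have hnosol : ∀ i, ¬ ∃ x ∈ H, ∀ j, f i j x < 0 := by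
    rintro i ⟨x, hx, hall⟩
    have hii : g i x < 0 := by
      have := hall i
      simpa [hf] using this
    have hrix : r i x < r i hbar := by
      have : r i x - r i hbar < 0 := hii
      linarith
    obtain ⟨a', ha'1, ha'2⟩ := hprop i x hx hrix
    have hne : a' ≠ i := fun h => by rw [h] at ha'1; linarith
    have hlt := hall a'
    simp only [hf, if_neg hne] at hlt
    have : g i x + M * g a' x ≥ 0 := by
      simp only [hg]
      linarith
    linarith
  choose lam hlam0 hlamsum hlamineq using fun i =>
    gordan_convex H hH ⟨hbar, hbarH⟩ (f i) (hfconv i) (hnosol i)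
  set c : A → A → ℝ := fun i j => if j = i then (∑ k, lam i k) else M * lam i j with hc
  have hcnn : ∀ i j, 0 ≤ c i j := by
    intro i j
    simp only [hc]
    split
    · exact (hlamsum i).le
    · exact mul_nonneg hM.le (hlam0 i j)
  have key : ∀ i, ∀ x ∈ H, 0 ≤ ∑ j, c i j * g j x := by
    intro i x hx
    have h0 := hlamineq i x hx
    have heq : ∑ j, lam i j * f i j x = ∑ j, c i j * g j x := by
      rw [Finset.sum_eq_add_sum_sdiff_singleton_of_mem (Finset.mem_univ i)
          (fun j => lam i j * f i j x),
        Finset.sum_eq_add_sum_sdiff_singleton_of_mem (Finset.mem_univ i)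
          (fun j => c i j * g j x)]
      have e1 : ∑ j ∈ Finset.univ \ {i}, lam i j * f i j x
          = ∑ j ∈ Finset.univ \ {i}, (lam i j * g i x + M * lam i j * g j x) := by
        apply Finset.sum_congr rfl
        intro j hj
        have hji : j ≠ i := by
          simp only [Finset.mem_sdiff, Finset.mem_singleton] at hj
          exact hj.2
        simp only [hf, if_neg hji]
        ring
      have e2 : ∑ j ∈ Finset.univ \ {i}, c i j * g j x
          = ∑ j ∈ Finset.univ \ {i}, M * lam i j * g j x := by
        apply Finset.sum_congr rfl
        intro j hj
        have hji : j ≠ i := by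
          simp only [Finset.mem_sdiff, Finset.mem_singleton] at hj
          exact hj.2
        simp only [hc, if_neg hji]
      have e3 : c i i = lam i i + ∑ k ∈ Finset.univ \ {i}, lam i k := by
        simp only [hc, if_pos rfl]
        exact Finset.sum_eq_add_sum_sdiff_singleton_of_mem (Finset.mem_univ i) (fun k => lam i k)
      have e4 : (f i i x : ℝ) = g i x := by simp [hf]
      rw [e1, e2, e3, e4, Finset.sum_add_distrib, ← Finset.sum_mul]
      ring
    rw [heq] at h0
    exact h0
  set μ0 : A → ℝ := fun j => ∑ i, c i j with hμ0
  have hμ0pos : ∀ j, 0 < μ0 j := by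
    intro j
    apply Finset.sum_pos' (fun i _ => hcnn i j)
    refine ⟨j, Finset.mem_univ j, ?_⟩
    simp only [hc, if_pos rfl]
    exact hlamsum j
  have hμ0ineq : ∀ x ∈ H, 0 ≤ ∑ j, μ0 j * g j x := by
    intro x hx
    have : ∑ j, μ0 j * g j x = ∑ i, ∑ j, c i j * g j x := by
      rw [Finset.sum_comm]
      apply Finset.sum_congr rfl
      intro j _
      rw [Finset.sum_mul]
    rw [this]
    exact Finset.sum_nonneg fun i _ => key i x hx
  set T : ℝ := ∑ j, μ0 j with hT
  have hTpos : 0 < T := Finset.sum_pos (fun j _ => hμ0pos j) Finset.univ_nonempty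
  refine ⟨fun j => μ0 j / T, fun j => div_pos (hμ0pos j) hTpos, ?_, ?_⟩
  · rw [← Finset.sum_div, ← hT, div_self hTpos.ne']
  · intro h hh
    have h1 := hμ0ineq h hh
    have h2 : ∑ j, μ0 j * r j hbar ≤ ∑ j, μ0 j * r j h := by
      have e : ∑ j, μ0 j * g j h = ∑ j, μ0 j * r j h - ∑ j, μ0 j * r j hbar := by
        rw [← Finset.sum_sub_distrib]
        apply Finset.sum_congr rfl
        intro j _
        simp only [hg]
        ring
      rw [e] at h1
      linarith
    have e2 : ∀ s : A → ℝ, ∑ a, μ0 a / T * s a = (∑ a, μ0 a * s a) / T := by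
      intro s
      rw [Finset.sum_div]
      exact Finset.sum_congr rfl fun a _ => by ring
    rw [e2, e2]
    gcongr
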